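/- For the sequence N_m (minimal cardinality of a square-free left cycle set of multipermutational level m), the inequality N_m ≤ 2^{m-2} - 6·2^{m-6} + 1 holds for every m > 5. -/
import Mathlib


/-- A left cycle set: each left multiplication `op x` is bijective and the
cycloid identity `(x·y)·(x·z) = (y·x)·(y·z)` holds. -/
def IsCycleSet {X : Type*} (op : X → X → X) : Prop :=
  (∀ x, Function.Bijective (op x)) ∧
  ∀ x y z, op (op x y) (op x z) = op (op y x) (op y z)

/-- Square-free: `x·x = x` for all `x`. -/
def IsSquareFree {X : Type*} (op : X → X → X) : Prop := ∀ x, op x x = x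

/-- Non-degenerate: the squaring map `x ↦ x·x` is bijective. -/
def IsNonDeg {X : Type*} (op : X → X → X) : Prop :=
  Function.Bijective (fun x => op x x)

/-- An automorphism of a left cycle set. -/
def IsAut {X : Type*} (op : X → X → X) (α : X → X) : Prop :=
  Function.Bijective α ∧ ∀ x y, α (op x y) = op (α x) (α y)

/-- Irretractable: the map `x ↦ σ_x` is injective. -/
def IsIrretractable {X : Type*} (op : X → X → X) : Prop := Function.Injective op

/-- `retRel op n x y` says `σ_{[n]}(x) = σ_{[n]}(y)`, i.e. `x` and `y` have the same
image in the `n`-th retraction `σⁿ(X)`. -/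
def retRel {X : Type*} (op : X → X → X) : ℕ → X → X → Prop
  | 0 => Eq
  | n + 1 => fun x y => ∀ z, retRel op n (op x z) (op y z)

/-- `X` has multipermutational level `m`: `m` is minimal with `|σᵐ(X)| = 1`. -/
def HasMPL {X : Type*} (op : X → X → X) (m : ℕ) : Prop :=
  (∀ x y, retRel op m x y) ∧ ∀ k < m, ¬ (∀ x y, retRel op k x y)

/-- The solution `r(x,y) = (λ_x(y), λ_x(y)·x)` associated to a cycle set,
where `lam x` is the inverse of `op x`. -/
def rmap {X : Type*} (op lam : X → X → X) : X × X → X × X :=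
  fun p => (lam p.1 p.2, op (lam p.1 p.2) p.1)

/-- `r × id`. -/
def r1map {X : Type*} (r : X × X → X × X) : X × X × X → X × X × X :=
  fun p => ((r (p.1, p.2.1)).1, ((r (p.1, p.2.1)).2, p.2.2))

/-- `id × r`. -/
def r2map {X : Type*} (r : X × X → X × X) : X × X × X → X × X × X :=
  fun p => (p.1, r p.2)

/-- One-sided extension of a cycle set by an automorphism `α`, with `none` as the
new element `z`: `x∘y = x·y`, `x∘z = z`, `z∘y = α(y)`. -/
def extOp {X : Type*} (op : X → X → X) (α : X → X) :
    Option X → Option X → Option X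
  | some x, some y => some (op x y)
  | _, none => none
  | none, some y => some (α y)

/-- The dynamical extension `X × ℤ/2ℤ` with `(x,s)·(y,t) = (x·y, t + 1 - δ_{x,y})`. -/
def doubleOp {X : Type*} [DecidableEq X] (op : X → X → X) :
    X × ZMod 2 → X × ZMod 2 → X × ZMod 2 :=
  fun p q => (op p.1 q.1, if p.1 = q.1 then q.2 else q.2 + 1)

/-- The Bachiller–Cedó–Jespers–Okniński operation on `A × B × I`. -/
def bcjoOp {A B I : Type*} [AddCommGroup A] [AddCommGroup B] [DecidableEq I]
    (φ₁ : A → B) (φ₂ : B →+ A) : A × B × I → A × B × I → A × B × I :=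
  fun p q =>
    if p.2.2 = q.2.2 then (q.1, q.2.1 - φ₁ (p.1 - q.1), q.2.2)
    else (q.1 - φ₂ p.2.1, q.2.1, q.2.2)

/-- One-sided extension of `X` by a cycle set `Y` acting by automorphisms:
`x∘y = x·y` inside `X` and `Y`, `x∘y = y` for `x ∈ X, y ∈ Y`, `y∘x = α(y)(x)`. -/
def sumOp {X Y : Type*} (opX : X → X → X) (opY : Y → Y → Y) (α : Y → X → X) :
    X ⊕ Y → X ⊕ Y → X ⊕ Y
  | .inl p, .inl q => .inl (opX p q)
  | .inl _, .inr y => .inr y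
  | .inr y, .inl q => .inl (α y q)
  | .inr y, .inr y' => .inr (opY y y')

/-- The set of cardinalities of finite square-free non-degenerate cycle sets of
multipermutational level `m`; `N_m` is its infimum. -/
def Nset (m : ℕ) : Set ℕ :=
  {n | ∃ (X : Type) (op : X → X → X), Finite X ∧ IsCycleSet op ∧ IsSquareFree op ∧
        IsNonDeg op ∧ HasMPL op m ∧ Nat.card X = n}

/-- The set of cardinalities of finite square-free cycle sets of level `k` admitting
an automorphism `α` with `σ_{[k-1]}(x) ≠ σ_{[k-1]}(α(x))` for some `x`;
`N̄_k` is its infimum. -/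
def NbarSet (k : ℕ) : Set ℕ :=
  {n | ∃ (X : Type) (op : X → X → X), Finite X ∧ IsCycleSet op ∧ IsSquareFree op ∧
        HasMPL op k ∧ (∃ (α : X → X) (x : X), IsAut op α ∧ ¬ retRel op (k - 1) x (α x)) ∧
        Nat.card X = n}

theorem retRel_refl {X : Type*} (op : X → X → X) : ∀ n x, retRel op n x x := by
  intro n; induction n with
  | zero => intro x; rfl
  | succ n ih => intro x z; exact ih _

theorem retRel_symm {X : Type*} (op : X → X → X) :
    ∀ n x y, retRel op n x y → retRel op n y x := by
  intro n; induction n with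
  | zero => intro x y h; exact h.symm
  | succ n ih => intro x y h z; exact ih _ _ (h z)

theorem retRel_all_mono {X : Type*} (op : X → X → X) {n : ℕ}
    (h : ∀ x y, retRel op n x y) : ∀ x y, retRel op (n+1) x y := by
  intro x y z; exact h _ _

theorem retRel_all_le {X : Type*} (op : X → X → X) {n m : ℕ} (hnm : n ≤ m)
    (h : ∀ x y, retRel op n x y) : ∀ x y, retRel op m x y := by
  induction hnm with
  | refl => exact h
  | step _ ih => exact retRel_all_mono op ih

theorem retRel_transfer {X Y : Type*} (op : X → X → X) (opq : Y → Y → Y)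
    (π : X → Y) (hcomp : ∀ x z, π (op x z) = opq (π x) (π z))
    (hid : ∀ x y, π x = π y → retRel op 1 x y) :
    ∀ n x y, retRel opq n (π x) (π y) → retRel op (n+1) x y := by
  intro n; induction n with
  | zero => intro x y h; exact hid x y h
  | succ n ih =>
    intro x y h z
    apply ih
    rw [hcomp, hcomp]
    exact h (π z)

theorem sf_nondeg {X : Type*} {op : X → X → X} (hsf : IsSquareFree op) :
    IsNonDeg op := by
  have : (fun x => op x x) = id := funext fun x => hsf x
  rw [IsNonDeg, this]; exact Function.bijective_id

section Double
variable {X : Type*} [DecidableEq X] (op : X → X → X)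

theorem retRel_double_succ :
    ∀ (n : ℕ) (p q : X × ZMod 2),
      retRel (doubleOp op) (n+1) p q ↔ retRel op n p.1 q.1 := by
  intro n
  induction n with
  | zero =>
    intro p q
    constructor
    · intro h
      have h2 := h (p.1, 0)
      have h3 : (doubleOp op p (p.1,0)).2 = (doubleOp op q (p.1,0)).2 := by
        show (doubleOp op p (p.1,0)).2 = _
        rw [h2]
      simp only [doubleOp, if_pos rfl] at h3
      by_cases hq : q.1 = p.1
      · exact hq.symm
      · rw [if_neg hq] at h3
        exact absurd h3.symm (by simp)
    · intro h z
      have h' : p.1 = q.1 := h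
      show doubleOp op p z = doubleOp op q z
      simp only [doubleOp, h']
  | succ n ih =>
    intro p q
    constructor
    · intro h z
      have := (ih (doubleOp op p (z, 0)) (doubleOp op q (z, 0))).mp (h (z,0))
      simpa [doubleOp] using this
    · intro h z
      apply (ih _ _).mpr
      simpa [doubleOp] using h z.1

theorem double_cycleset (hcs : IsCycleSet op) [Finite X] :
    IsCycleSet (doubleOp op) := by
  constructor
  · intro p
    rw [← Finite.injective_iff_bijective]
    intro a b hab
    have h1 : op p.1 a.1 = op p.1 b.1 := congrArg Prod.fst hab
    have h1' : a.1 = b.1 := (hcs.1 p.1).1 h1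
    have h2 := congrArg Prod.snd hab
    simp only [doubleOp, h1'] at h2
    by_cases hpb : p.1 = b.1
    · rw [if_pos hpb, if_pos hpb] at h2; exact Prod.ext h1' h2
    · rw [if_neg hpb, if_neg hpb] at h2
      exact Prod.ext h1' (add_right_cancel h2)
  · intro p q r
    have hfst : op (op p.1 q.1) (op p.1 r.1) = op (op q.1 p.1) (op q.1 r.1) :=
      hcs.2 p.1 q.1 r.1
    have hinj : ∀ x y z : X, (op x y = op x z) ↔ (y = z) :=
      fun x y z => ⟨fun h => (hcs.1 x).1 h, fun h => by rw [h]⟩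
    show (_, _) = (_, _)
    apply Prod.ext
    · exact hfst
    · show (if op p.1 q.1 = op p.1 r.1 then _ else _) =
          (if op q.1 p.1 = op q.1 r.1 then _ else _)
      simp only [hinj]
      by_cases h1 : q.1 = r.1 <;> by_cases h2 : p.1 = r.1 <;>
        simp [doubleOp, h1, h2]

theorem double_squarefree (hsf : IsSquareFree op) : IsSquareFree (doubleOp op) := by
  intro p
  show (_, _) = _
  rw [hsf p.1, if_pos rfl]

theorem double_mpl {k : ℕ} (hk : 1 ≤ k) (hm : HasMPL op k) :
    HasMPL (doubleOp op) (k+1) := by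
  have hne : Nonempty X := by
    by_contra h
    exact hm.2 0 hk (fun x y => ((h ⟨x⟩).elim : _))
  constructor
  · intro p q
    exact (retRel_double_succ op k p q).mpr (hm.1 p.1 q.1)
  · intro j hj hall
    match j, hall with
    | 0, hall =>
      obtain ⟨x⟩ := hne
      have := hall (x, 0) (x, 1)
      have h2 : (0 : ZMod 2) = 1 := congrArg Prod.snd this
      exact absurd h2 (by decide)
    | (j+1), hall =>
      apply hm.2 j (by omega)
      intro x y
      exact (retRel_double_succ op j (x,0) (y,0)).mp (hall (x,0) (y,0))

theorem double_aut {α : X → X} (hcs : IsCycleSet op) (ha : IsAut op α) :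
    IsAut (doubleOp op) (Prod.map α id) := by
  constructor
  · exact (ha.1.prodMap Function.bijective_id)
  · intro p q
    have hiff : (α p.1 = α q.1) ↔ (p.1 = q.1) :=
      ⟨fun h => ha.1.1 h, fun h => by rw [h]⟩
    show (α (op p.1 q.1), _) = (op (α p.1) (α q.1), if α p.1 = α q.1 then _ else _)
    rw [if_congr hiff rfl rfl]
    apply Prod.ext
    · exact ha.2 p.1 q.1
    · rfl

theorem double_break {α : X → X} {k : ℕ} (hk : 1 ≤ k) {x : X}
    (hbr : ¬ retRel op (k-1) x (α x)) :
    ¬ retRel (doubleOp op) k ((x,0) : X × ZMod 2) (Prod.map α id (x,0)) := by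
  intro h
  obtain ⟨k, rfl⟩ : ∃ j, k = j + 1 := ⟨k - 1, by omega⟩
  exact hbr ((retRel_double_succ op k (x,0) _).mp h)

end Double

section Ext
variable {X : Type*} (op : X → X → X) (α : X → X)

theorem retRel_ext_some :
    ∀ (n : ℕ) (x y : X),
      retRel (extOp op α) n (some x) (some y) ↔ retRel op n x y := by
  intro n
  induction n with
  | zero =>
    intro x y
    constructor
    · intro h; exact Option.some_injective _ h
    · intro h
      have h' : x = y := h
      rw [h']
      exact retRel_refl _ 0 _
  | succ n ih =>
    intro x y
    constructor
    · intro h z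
      exact (ih _ _).mp (h (some z))
    · intro h z
      match z with
      | none => exact retRel_refl _ n _
      | some u => exact (ih _ _).mpr (h u)

theorem retRel_ext_none :
    ∀ (n : ℕ) (x : X),
      retRel (extOp op α) (n+1) none (some x) ↔ ∀ u, retRel op n (α u) (op x u) := by
  intro n x
  constructor
  · intro h u
    exact (retRel_ext_some op α n _ _).mp (h (some u))
  · intro h z
    match z with
    | none => exact retRel_refl _ n _
    | some u => exact (retRel_ext_some op α n _ _).mpr (h u)

theorem ext_cycleset (hcs : IsCycleSet op) (ha : IsAut op α) [Finite X] :
    IsCycleSet (extOp op α) := by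
  constructor
  · intro p
    have : Fintype X := Fintype.ofFinite X
    have : Finite (Option X) := Finite.of_fintype _
    rw [← Finite.injective_iff_bijective]
    intro a b hab
    match p, a, b, hab with
    | some x, some a, some b, hab =>
      exact congrArg some ((hcs.1 x).1 (Option.some_injective _ hab))
    | some x, none, none, _ => rfl
    | some x, some a, none, hab => exact absurd hab (by simp [extOp])
    | some x, none, some b, hab => exact absurd hab (by simp [extOp])
    | none, some a, some b, hab =>
      exact congrArg some (ha.1.1 (Option.some_injective _ hab))
    | none, none, none, _ => rfl
    | none, some a, none, hab => exact absurd hab (by simp [extOp])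
    | none, none, some b, hab => exact absurd hab (by simp [extOp])
  · intro p q r
    match p, q, r with
    | some x, some y, some z =>
      show some _ = some _
      exact congrArg some (hcs.2 x y z)
    | some x, some y, none => rfl
    | some x, none, none => rfl
    | none, some y, none => rfl
    | none, none, none => rfl
    | none, none, some z =>
      show some (α (α z)) = some (α (α z))
      rfl
    | none, some y, some z =>
      show some (op (α y) (α z)) = some (α (op y z))
      rw [ha.2 y z]
    | some x, none, some z =>
      show some (α (op x z)) = some (op (α x) (α z))
      rw [ha.2 x z]

theorem ext_squarefree (hsf : IsSquareFree op) : IsSquareFree (extOp op α) := by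
  intro p
  match p with
  | none => rfl
  | some x => exact congrArg some (hsf x)

theorem ext_mpl {k : ℕ} (hk : 1 ≤ k) (hm : HasMPL op k) (hsf : IsSquareFree op)
    {x₀ : X} (hbr : ¬ retRel op (k-1) x₀ (α x₀)) :
    HasMPL (extOp op α) (k+1) := by
  obtain ⟨k, rfl⟩ : ∃ j, k = j + 1 := ⟨k - 1, by omega⟩
  simp only [Nat.add_sub_cancel] at hbr
  constructor
  · intro p q
    have key : ∀ x : X, retRel (extOp op α) (k+2) none (some x) := by
      intro x
      intro z
      match z with
      | none => exact retRel_refl _ _ _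
      | some u => exact (retRel_ext_some op α _ _ _).mpr (hm.1 (α u) (op x u))
    match p, q with
    | some x, some y =>
      exact (retRel_ext_some op α _ _ _).mpr (retRel_all_mono op hm.1 x y)
    | none, some y => exact key y
    | some x, none => exact retRel_symm _ _ _ _ (key x)
    | none, none => exact retRel_refl _ _ _
  · intro j hj hall
    have hjk : j ≤ k + 1 := by omega
    have hall' : ∀ p q, retRel (extOp op α) (k+1) p q :=
      retRel_all_le _ hjk hall
    have h1 := (retRel_ext_none op α k x₀).mp (hall' none (some x₀))
    have h2 := h1 x₀
    rw [hsf x₀] at h2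
    exact hbr (retRel_symm _ _ _ _ h2)

end Ext

section BaseEx
set_option maxHeartbeats 4000000
-- decidability of retRel
def retRelDec {X : Type*} [DecidableEq X] [Fintype X] (op : X → X → X) :
    ∀ (n : ℕ) (x y : X), Decidable (retRel op n x y)
  | 0, x, y => inferInstanceAs (Decidable (x = y))
  | n+1, x, y =>
    haveI : ∀ z, Decidable (retRel op n (op x z) (op y z)) :=
      fun z => retRelDec op n (op x z) (op y z)
    inferInstanceAs (Decidable (∀ z, retRel op n (op x z) (op y z)))

attribute [instance] retRelDec

def t10 : Fin 10 → Fin 10 → Fin 10 :=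
  ![![0, 1, 2, 3, 4, 5, 6, 7, 8, 9],
    ![0, 1, 2, 3, 4, 5, 6, 7, 8, 9],
    ![0, 1, 2, 3, 5, 4, 6, 7, 8, 9],
    ![1, 0, 2, 3, 5, 4, 6, 7, 8, 9],
    ![0, 1, 3, 2, 4, 5, 6, 7, 8, 9],
    ![1, 0, 3, 2, 4, 5, 6, 7, 8, 9],
    ![0, 1, 2, 3, 4, 5, 6, 7, 9, 8],
    ![0, 1, 4, 5, 2, 3, 6, 7, 9, 8],
    ![0, 1, 2, 3, 4, 5, 7, 6, 8, 9],
    ![0, 1, 4, 5, 2, 3, 7, 6, 8, 9]]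

def t9 : Fin 9 → Fin 9 → Fin 9 :=
  ![![0, 1, 2, 3, 4, 5, 6, 7, 8],
    ![0, 1, 2, 4, 3, 5, 6, 7, 8],
    ![0, 1, 2, 4, 3, 5, 6, 7, 8],
    ![0, 2, 1, 3, 4, 5, 6, 7, 8],
    ![0, 2, 1, 3, 4, 5, 6, 7, 8],
    ![0, 1, 2, 3, 4, 5, 6, 8, 7],
    ![0, 3, 4, 1, 2, 5, 6, 8, 7],
    ![0, 1, 2, 3, 4, 6, 5, 7, 8],
    ![0, 3, 4, 1, 2, 6, 5, 7, 8]]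

def t7 : Fin 7 → Fin 7 → Fin 7 :=
  ![![0, 1, 2, 3, 4, 5, 6],
    ![0, 1, 2, 3, 4, 5, 6],
    ![0, 1, 2, 3, 4, 5, 6],
    ![0, 1, 2, 3, 4, 6, 5],
    ![0, 2, 1, 3, 4, 6, 5],
    ![0, 1, 2, 4, 3, 5, 6],
    ![0, 2, 1, 4, 3, 5, 6]]

def t5 : Fin 5 → Fin 5 → Fin 5 :=
  ![![0, 1, 2, 3, 4],
    ![0, 1, 2, 4, 3],
    ![0, 1, 2, 4, 3],
    ![0, 2, 1, 3, 4],
    ![0, 2, 1, 3, 4]]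

def t3 : Fin 3 → Fin 3 → Fin 3 :=
  ![![0, 1, 2], ![0, 1, 2], ![0, 1, 2]]

def p109 : Fin 10 → Fin 9 := ![0, 0, 1, 2, 3, 4, 5, 6, 7, 8]
def p97 : Fin 9 → Fin 7 := ![0, 1, 1, 2, 2, 3, 4, 5, 6]
def p75 : Fin 7 → Fin 5 := ![0, 0, 0, 1, 2, 3, 4]
def p53 : Fin 5 → Fin 3 := ![0, 1, 1, 2, 2]

def a10 : Fin 10 → Fin 10 := ![0, 1, 2, 3, 4, 5, 8, 9, 6, 7]

theorem t10_cycleset : IsCycleSet t10 := by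
  constructor
  · decide
  · decide

theorem t10_squarefree : IsSquareFree t10 := by
  have h : ∀ x, t10 x x = x := by decide
  exact h

theorem t10_aut : IsAut t10 a10 := by
  constructor
  · decide
  · decide

theorem t10_pos : ∀ x y, retRel t10 5 x y := by
  have h3 : ∀ a b : Fin 3, retRel t3 1 a b := by decide
  have h5 : ∀ a b : Fin 5, retRel t5 2 a b := fun a b =>
    retRel_transfer t5 t3 p53 (by decide) (by decide) 1 a b (h3 _ _)
  have h7 : ∀ a b : Fin 7, retRel t7 3 a b := fun a b =>
    retRel_transfer t7 t5 p75 (by decide) (by decide) 2 a b (h5 _ _)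
  have h9 : ∀ a b : Fin 9, retRel t9 4 a b := fun a b =>
    retRel_transfer t9 t7 p97 (by decide) (by decide) 3 a b (h7 _ _)
  exact fun a b =>
    retRel_transfer t10 t9 p109 (by decide) (by decide) 4 a b (h9 _ _)

theorem t10_neg : ¬ retRel t10 4 0 6 := by decide

theorem t10_mpl : HasMPL t10 5 := by
  constructor
  · exact t10_pos
  · intro k hk hall
    exact t10_neg (retRel_all_le t10 (show k ≤ 4 by omega) hall 0 6)

theorem t10_break : ¬ retRel t10 4 6 (a10 6) := by decide

end BaseEx


theorem chain_exists : ∀ k, 5 ≤ k →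
    ∃ (X : Type) (op : X → X → X) (α : X → X) (x₀ : X),
      Finite X ∧ IsCycleSet op ∧ IsSquareFree op ∧ HasMPL op k ∧ IsAut op α ∧
      ¬ retRel op (k-1) x₀ (α x₀) ∧ Nat.card X = 10 * 2 ^ (k - 5) := by
  intro k hk
  induction k, hk using Nat.le_induction with
  | base =>
    refine ⟨Fin 10, t10, a10, 6, inferInstance, t10_cycleset, t10_squarefree,
      t10_mpl, t10_aut, t10_break, by simp⟩
  | succ k hk ih =>
    obtain ⟨X, op, α, x₀, hfin, hcs, hsf, hmpl, haut, hbr, hcard⟩ := ih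
    haveI : Finite X := hfin
    haveI : DecidableEq X := Classical.decEq X
    refine ⟨X × ZMod 2, doubleOp op, Prod.map α id, (x₀, 0), inferInstance,
      double_cycleset op hcs, double_squarefree op hsf,
      double_mpl op (by omega) hmpl, double_aut op hcs haut,
      ?_, ?_⟩
    · have := double_break op (k := k) (by omega) (x := x₀) hbr
      simpa using this
    · have h2 : Nat.card (X × ZMod 2) = Nat.card X * 2 := by
        simp [Nat.card_prod, Nat.card_zmod]
      rw [h2, hcard]
      have : k + 1 - 5 = (k - 5) + 1 := by omega
      rw [this, pow_succ]
      ring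


/-- `N_m ≤ 2^{m-2} - 6·2^{m-6} + 1` for every `m > 5`. -/
theorem stmt18 (m : ℕ) (hm : 5 < m) :
    sInf (Nset m) ≤ 2 ^ (m - 2) - 6 * 2 ^ (m - 6) + 1 := by
  obtain ⟨k, rfl⟩ : ∃ k, m = k + 1 := ⟨m - 1, by omega⟩
  have hk : 5 ≤ k := by omega
  obtain ⟨X, op, α, x₀, hfin, hcs, hsf, hmpl, haut, hbr, hcard⟩ := chain_exists k hk
  haveI : Finite X := hfin
  haveI : Fintype X := Fintype.ofFinite X
  haveI : Finite (Option X) := Finite.of_fintype _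
  have hmem : (10 * 2 ^ (k - 5) + 1) ∈ Nset (k + 1) := by
    refine ⟨Option X, extOp op α, inferInstance,
      ext_cycleset op α hcs haut, ext_squarefree op α hsf,
      sf_nondeg (ext_squarefree op α hsf),
      ext_mpl op α (by omega) hmpl hsf hbr, ?_⟩
    rw [show Nat.card (Option X) = Nat.card X + 1 by
      simp [Nat.card_eq_fintype_card], hcard]
  have hle := Nat.sInf_le hmem
  have harith : 2 ^ (k + 1 - 2) - 6 * 2 ^ (k + 1 - 6) + 1 = 10 * 2 ^ (k - 5) + 1 := by
    have e1 : k + 1 - 2 = (k - 5) + 4 := by omega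
    have e2 : k + 1 - 6 = k - 5 := by omega
    rw [e1, e2, pow_add]
    have : (2:ℕ) ^ 4 = 16 := by norm_num
    rw [this]
    omega
  rw [harith]
  exact hle
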